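/- In the Gaussian location model, if θ̂_n satisfies the sparsity condition P_{n,θ}(θ̂_n = 0) → 1 for θ = 0, and l : ℝ → [0,∞) is any nonnegative loss function, then sup_{θ∈ℝ} E_{n,θ}[l(√n(θ̂_n − θ))] → sup_{s∈ℝ} l(s) as n → ∞. -/

import Mathlib

open MeasureTheory ProbabilityTheory Filter Topology
open scoped ENNReal

lemma lintegral_pi_prod : ∀ {n : ℕ} (μ : Measure ℝ) [SigmaFinite μ]
    (f : Fin n → ℝ → ℝ≥0∞), (∀ i, Measurable (f i)) →
    ∫⁻ x : Fin n → ℝ, ∏ i, f i (x i) ∂Measure.pi (fun _ => μ) = ∏ i, ∫⁻ x, f i x ∂μ := by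
  intro n
  induction n with
  | zero => intro μ _ f _; simp [Measure.pi_empty_univ]
  | succ n ih =>
    intro μ _ f hf
    have hmp := (measurePreserving_piFinSuccAbove (fun _ : Fin (n+1) => μ) 0).symm
    have hFm : Measurable fun x : Fin (n+1) → ℝ => ∏ i, f i (x i) :=
      Finset.measurable_prod _ fun i _ => (hf i).comp (measurable_pi_apply i)
    rw [← hmp.lintegral_comp hFm]
    simp only [MeasurableEquiv.piFinSuccAbove_symm_apply, Fin.insertNthEquiv,
      Equiv.coe_fn_mk, Fin.prod_univ_succ, Fin.insertNth_apply_same,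
      Fin.insertNth_apply_succAbove, Fin.zero_succAbove, Fin.insertNth_zero,
      Fin.cons_zero, Fin.cons_succ, cast_eq]
    rw [lintegral_prod_mul (f := f 0) (g := fun x : Fin n → ℝ => ∏ i, f i.succ (x i))
      (hf 0).aemeasurable
      (Finset.measurable_prod _ fun i _ => (hf i.succ).comp (measurable_pi_apply i)).aemeasurable]
    rw [ih μ (fun i => f i.succ) (fun i => hf i.succ)]

noncomputable def wfun (θ : ℝ) (x : ℝ) : ℝ≥0∞ := ENNReal.ofReal (Real.exp (θ * x - θ^2/2))

lemma wfun_meas (θ : ℝ) : Measurable (wfun θ) := by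
  unfold wfun
  exact ENNReal.measurable_ofReal.comp
    (Real.measurable_exp.comp ((measurable_id.const_mul θ).sub measurable_const))

lemma gauss_shift (θ : ℝ) :
    (gaussianReal 0 1).withDensity (wfun θ) = gaussianReal θ 1 := by
  rw [gaussianReal_of_var_ne_zero 0 one_ne_zero, gaussianReal_of_var_ne_zero θ one_ne_zero,
    ← withDensity_mul _ (measurable_gaussianPDF 0 1) (wfun_meas θ)]
  congr 1
  funext x
  simp only [Pi.mul_apply, gaussianPDF, wfun,
    ← ENNReal.ofReal_mul (gaussianPDFReal_nonneg 0 1 x)]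
  congr 1
  simp only [gaussianPDFReal, NNReal.coe_one, mul_one, sub_zero]
  rw [mul_assoc, ← Real.exp_add]
  ring_nf

lemma lintegral_w2 (θ : ℝ) :
    ∫⁻ x, ENNReal.ofReal (Real.exp (2*θ*x - θ^2)) ∂gaussianReal 0 1
      = ENNReal.ofReal (Real.exp (θ^2)) := by
  have hgm : Measurable fun x : ℝ => ENNReal.ofReal (Real.exp (2*θ*x - θ^2)) :=
    ENNReal.measurable_ofReal.comp (Real.measurable_exp.comp
      ((measurable_const.mul measurable_id).sub measurable_const))
  rw [gaussianReal_of_var_ne_zero 0 one_ne_zero,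
    lintegral_withDensity_eq_lintegral_mul _ (measurable_gaussianPDF 0 1) hgm]
  have h2 : ∀ x : ℝ, gaussianPDF 0 1 x * ENNReal.ofReal (Real.exp (2*θ*x - θ^2))
      = ENNReal.ofReal (Real.exp (θ^2)) * gaussianPDF (2*θ) 1 x := by
    intro x
    simp only [gaussianPDF, ← ENNReal.ofReal_mul (gaussianPDFReal_nonneg 0 1 x),
      ← ENNReal.ofReal_mul (Real.exp_pos (θ^2)).le]
    congr 1
    simp only [gaussianPDFReal, NNReal.coe_one, mul_one, sub_zero]
    have e : Real.exp (-x^2/2) * Real.exp (2*θ*x - θ^2)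
        = Real.exp (θ^2) * Real.exp (-(x - 2*θ)^2/2) := by
      rw [← Real.exp_add, ← Real.exp_add]; congr 1; ring
    rw [mul_assoc, e]; ring
  simp only [Pi.mul_apply]
  simp_rw [h2]
  rw [lintegral_const_mul _ (measurable_gaussianPDF (2*θ) 1),
    lintegral_gaussianPDF_eq_one (2*θ) one_ne_zero, mul_one]

/-- Joint law of a sample of size `n` of i.i.d. `N(θ,1)` observations. -/
noncomputable def gaussP (n : ℕ) (θ : ℝ) : Measure (Fin n → ℝ) :=
  Measure.pi fun _ => gaussianReal θ 1

instance (n : ℕ) (θ : ℝ) : IsProbabilityMeasure (gaussP n θ) := by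
  unfold gaussP; infer_instance

lemma indicator_pi_prod {n : ℕ} (s : Fin n → Set ℝ) (g : ℝ → ℝ≥0∞) (y : Fin n → ℝ) :
    (Set.pi Set.univ s).indicator (fun y => ∏ i, g (y i)) y
      = ∏ i, (s i).indicator g (y i) := by
  by_cases h : y ∈ Set.pi Set.univ s
  · rw [Set.indicator_of_mem h]
    exact Finset.prod_congr rfl fun i _ =>
      (Set.indicator_of_mem (h i (Set.mem_univ i)) g).symm
  · rw [Set.indicator_of_notMem h]
    rw [Set.mem_univ_pi] at h
    push_neg at h
    obtain ⟨i, hi⟩ := h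
    exact (Finset.prod_eq_zero (Finset.mem_univ i)
      (Set.indicator_of_notMem hi g)).symm

lemma gaussP_withDensity (n : ℕ) (θ : ℝ) :
    gaussP n θ = (gaussP n 0).withDensity (fun y => ∏ i, wfun θ (y i)) := by
  unfold gaussP
  refine Measure.pi_eq fun s hs => ?_
  rw [withDensity_apply _ (MeasurableSet.univ_pi hs),
    ← lintegral_indicator (MeasurableSet.univ_pi hs)]
  simp_rw [indicator_pi_prod s (wfun θ)]
  rw [lintegral_pi_prod (gaussianReal 0 1) (fun i => (s i).indicator (wfun θ))
    (fun i => (wfun_meas θ).indicator (hs i))]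
  refine Finset.prod_congr rfl fun i _ => ?_
  rw [lintegral_indicator (hs i), ← withDensity_apply _ (hs i), gauss_shift]

lemma gaussP_bound (n : ℕ) (θ : ℝ) {A : Set (Fin n → ℝ)} (hA : MeasurableSet A) :
    gaussP n θ A ≤ (gaussP n 0 A) ^ (1/2 : ℝ)
      * ENNReal.ofReal (Real.exp (n * θ^2)) ^ (1/2 : ℝ) := by
  set w2 : ℝ → ℝ≥0∞ := fun x => ENNReal.ofReal (Real.exp (2*θ*x - θ^2)) with hw2
  have hw2m : Measurable w2 :=
    ENNReal.measurable_ofReal.comp (Real.measurable_exp.comp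
      ((measurable_const.mul measurable_id).sub measurable_const))
  have hW : Measurable fun y : Fin n → ℝ => ∏ i, wfun θ (y i) :=
    Finset.measurable_prod _ fun i _ => (wfun_meas θ).comp (measurable_pi_apply i)
  have h1 : ∀ x : ℝ, wfun θ x ^ (2:ℝ) = w2 x := by
    intro x
    rw [wfun, ENNReal.ofReal_rpow_of_pos (Real.exp_pos _), hw2]
    congr 1
    rw [show (2:ℝ) = ((2:ℕ):ℝ) by norm_num, Real.rpow_natCast, sq, ← Real.exp_add]
    ring_nf
  rw [gaussP_withDensity n θ, withDensity_apply _ hA, ← lintegral_indicator hA]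
  have hps : ∀ y : Fin n → ℝ, A.indicator (fun y => ∏ i, wfun θ (y i)) y
      = A.indicator 1 y * ∏ i, wfun θ (y i) := by
    intro y; by_cases h : y ∈ A <;> simp [h]
  have hconj : Real.HolderConjugate 2 2 := Real.HolderConjugate.two_two
  calc ∫⁻ y, A.indicator (fun y => ∏ i, wfun θ (y i)) y ∂gaussP n 0
      = ∫⁻ y, ((A.indicator 1 : (Fin n → ℝ) → ℝ≥0∞)
          * (fun y : Fin n → ℝ => ∏ i, wfun θ (y i))) y ∂gaussP n 0 := by
        simp only [Pi.mul_apply]; simp_rw [hps]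
    _ ≤ (∫⁻ y, A.indicator 1 y ^ (2:ℝ) ∂gaussP n 0) ^ (1/2:ℝ)
        * (∫⁻ y, (∏ i, wfun θ (y i)) ^ (2:ℝ) ∂gaussP n 0) ^ (1/2:ℝ) :=
        ENNReal.lintegral_mul_le_Lp_mul_Lq _ hconj
          ((measurable_one.indicator hA)).aemeasurable hW.aemeasurable
    _ = (gaussP n 0 A) ^ (1/2:ℝ)
        * ENNReal.ofReal (Real.exp (n * θ^2)) ^ (1/2:ℝ) := by
        congr 2
        · have : ∀ y : Fin n → ℝ, A.indicator (1 : (Fin n → ℝ) → ℝ≥0∞) y ^ (2:ℝ)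
              = A.indicator 1 y := by
            intro y; by_cases h : y ∈ A <;>
              simp [h, ENNReal.zero_rpow_of_pos, ENNReal.one_rpow]
          simp_rw [this]
          exact lintegral_indicator_one hA
        · have hprod : ∀ y : Fin n → ℝ, (∏ i, wfun θ (y i)) ^ (2:ℝ)
              = ∏ i, w2 (y i) := by
            intro y
            calc (∏ i, wfun θ (y i)) ^ (2:ℝ)
                = ∏ i, wfun θ (y i) ^ (2:ℝ) := by
                  rw [show (2:ℝ) = ((2:ℕ):ℝ) by norm_num]
                  simp_rw [ENNReal.rpow_natCast]
                  exact (Finset.prod_pow _ _ _).symm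
              _ = ∏ i, w2 (y i) := Finset.prod_congr rfl fun i _ => h1 (y i)
          simp_rw [hprod]
          show (∫⁻ y : Fin n → ℝ, ∏ i, w2 (y i) ∂Measure.pi fun _ => gaussianReal 0 1) = _
          rw [lintegral_pi_prod (gaussianReal 0 1) (fun _ => w2) (fun _ => hw2m)]
          simp_rw [hw2, lintegral_w2 θ]
          rw [Finset.prod_const, Finset.card_univ, Fintype.card_fin,
            ← ENNReal.ofReal_pow (Real.exp_pos _).le, ← Real.exp_nat_mul]

theorem stmt_2
    (est : (n : ℕ) → (Fin n → ℝ) → ℝ)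
    (hmeas : ∀ n, Measurable (est n))
    (hsparse : Tendsto (fun n => gaussP n 0 {y | est n y = 0}) atTop (𝓝 1))
    (l : ℝ → ℝ) (hl : ∀ s, 0 ≤ l s) (hlmeas : Measurable l) :
    Tendsto (fun n : ℕ => ⨆ θ : ℝ,
        ∫⁻ y, ENNReal.ofReal (l (Real.sqrt n * (est n y - θ))) ∂(gaussP n θ))
      atTop (𝓝 (⨆ s : ℝ, ENNReal.ofReal (l s))) := by
  set S := ⨆ s : ℝ, ENNReal.ofReal (l s) with hS
  set F := fun n : ℕ => ⨆ θ : ℝ,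
    ∫⁻ y, ENNReal.ofReal (l (Real.sqrt n * (est n y - θ))) ∂(gaussP n θ) with hF
  have hAm : ∀ n, MeasurableSet {y : Fin n → ℝ | est n y = 0} :=
    fun n => (hmeas n) (measurableSet_singleton 0)
  have hle : ∀ n, F n ≤ S := by
    intro n
    refine iSup_le fun θ => ?_
    calc ∫⁻ y, ENNReal.ofReal (l (Real.sqrt n * (est n y - θ))) ∂gaussP n θ
        ≤ ∫⁻ _, S ∂gaussP n θ :=
          lintegral_mono fun y => le_iSup (fun s => ENNReal.ofReal (l s)) _
      _ = S := by rw [lintegral_const, measure_univ, mul_one]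
  have hc0 : Tendsto (fun n => gaussP n 0 {y : Fin n → ℝ | est n y = 0}ᶜ) atTop (𝓝 0) := by
    have h : ∀ n, gaussP n 0 {y : Fin n → ℝ | est n y = 0}ᶜ
        = 1 - gaussP n 0 {y : Fin n → ℝ | est n y = 0} :=
      fun n => prob_compl_eq_one_sub (hAm n)
    simp_rw [h]
    have := ENNReal.Tendsto.sub (tendsto_const_nhds (x := (1:ℝ≥0∞)))
      hsparse (Or.inl ENNReal.one_ne_top)
    simpa using this
  have hlim : ∀ s : ℝ, ENNReal.ofReal (l s) ≤ Filter.liminf F atTop := by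
    intro s
    set θn := fun n : ℕ => -s / Real.sqrt n with hθn
    have hcompl : Tendsto (fun n => gaussP n (θn n) {y : Fin n → ℝ | est n y = 0}ᶜ)
        atTop (𝓝 0) := by
      have hub : ∀ᶠ n in atTop, gaussP n (θn n) {y : Fin n → ℝ | est n y = 0}ᶜ
          ≤ (gaussP n 0 {y : Fin n → ℝ | est n y = 0}ᶜ) ^ (1/2:ℝ)
            * ENNReal.ofReal (Real.exp (s^2)) ^ (1/2:ℝ) := by
        filter_upwards [eventually_ge_atTop 1] with n hn
        have hbound := gaussP_bound n (θn n) (hAm n).compl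
        have hn0 : (0:ℝ) < n := by exact_mod_cast hn
        have heq : (n:ℝ) * (θn n)^2 = s^2 := by
          rw [hθn]
          rw [div_pow, Real.sq_sqrt hn0.le]
          field_simp
        rwa [heq] at hbound
      have hb0 : Tendsto (fun n => (gaussP n 0 {y : Fin n → ℝ | est n y = 0}ᶜ) ^ (1/2:ℝ)
          * ENNReal.ofReal (Real.exp (s^2)) ^ (1/2:ℝ)) atTop (𝓝 0) := by
        have h1 : Tendsto (fun n => (gaussP n 0 {y : Fin n → ℝ | est n y = 0}ᶜ) ^ (1/2:ℝ))
            atTop (𝓝 0) := by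
          have := (ENNReal.continuous_rpow_const (y := (1/2:ℝ))).tendsto 0 |>.comp hc0
          simpa [ENNReal.zero_rpow_of_pos, Function.comp_def] using this
        have := ENNReal.Tendsto.mul_const
          (b := ENNReal.ofReal (Real.exp (s^2)) ^ (1/2:ℝ)) h1
          (Or.inr (ENNReal.rpow_ne_top_of_nonneg (by norm_num) ENNReal.ofReal_ne_top))
        simpa using this
      exact tendsto_of_tendsto_of_tendsto_of_le_of_le' tendsto_const_nhds hb0
        (Eventually.of_forall fun n => zero_le) hub
    have hP : Tendsto (fun n => gaussP n (θn n) {y : Fin n → ℝ | est n y = 0})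
        atTop (𝓝 1) := by
      have h : ∀ n, gaussP n (θn n) {y : Fin n → ℝ | est n y = 0}
          = 1 - gaussP n (θn n) {y : Fin n → ℝ | est n y = 0}ᶜ := by
        intro n
        have := prob_compl_eq_one_sub (μ := gaussP n (θn n)) (hAm n).compl
        rwa [compl_compl] at this
      simp_rw [h]
      have := ENNReal.Tendsto.sub (tendsto_const_nhds (x := (1:ℝ≥0∞)))
        hcompl (Or.inl ENNReal.one_ne_top)
      simpa using this
    have hg : Tendsto (fun n => ENNReal.ofReal (l s)
        * gaussP n (θn n) {y : Fin n → ℝ | est n y = 0}) atTop (𝓝 (ENNReal.ofReal (l s))) := by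
      have := ENNReal.Tendsto.const_mul (a := ENNReal.ofReal (l s)) hP
        (Or.inr ENNReal.ofReal_ne_top)
      simpa using this
    have hev : ∀ᶠ n in atTop, ENNReal.ofReal (l s)
        * gaussP n (θn n) {y : Fin n → ℝ | est n y = 0} ≤ F n := by
      filter_upwards [eventually_ge_atTop 1] with n hn
      have hn0 : (0:ℝ) < n := by exact_mod_cast hn
      have hsq : Real.sqrt n ≠ 0 := by
        rw [Real.sqrt_ne_zero hn0.le]; exact hn0.ne'
      have hcongr : ∫⁻ y in {y : Fin n → ℝ | est n y = 0},
          ENNReal.ofReal (l (Real.sqrt n * (est n y - θn n))) ∂gaussP n (θn n)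
          = ENNReal.ofReal (l s) * gaussP n (θn n) {y : Fin n → ℝ | est n y = 0} := by
        rw [setLIntegral_congr_fun (hAm n) (fun y hy => ?_),
          setLIntegral_const]
        have hy' : est n y = 0 := hy
        rw [hy', hθn]
        congr 2
        field_simp
        ring
      calc ENNReal.ofReal (l s) * gaussP n (θn n) {y : Fin n → ℝ | est n y = 0}
          = ∫⁻ y in {y : Fin n → ℝ | est n y = 0},
            ENNReal.ofReal (l (Real.sqrt n * (est n y - θn n))) ∂gaussP n (θn n) := hcongr.symm
        _ ≤ ∫⁻ y, ENNReal.ofReal (l (Real.sqrt n * (est n y - θn n))) ∂gaussP n (θn n) :=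
            lintegral_mono' Measure.restrict_le_self le_rfl
        _ ≤ F n := le_iSup (fun θ => ∫⁻ y,
            ENNReal.ofReal (l (Real.sqrt n * (est n y - θ))) ∂gaussP n θ) (θn n)
    calc ENNReal.ofReal (l s)
        = Filter.liminf (fun n => ENNReal.ofReal (l s)
          * gaussP n (θn n) {y : Fin n → ℝ | est n y = 0}) atTop := hg.liminf_eq.symm
      _ ≤ Filter.liminf F atTop := liminf_le_liminf hev
  exact tendsto_of_le_liminf_of_limsup_le (iSup_le hlim)
    (limsup_le_of_le (by isBoundedDefault) (Eventually.of_forall hle))
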